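/- Let H ∈ (1/2,1), let α be a filter of order p ≥ 2, c(x) = -∑_{q,r} α_q α_r |q-r|^{2x}, and suppose N^{2H} S_N → c(H)/2 almost surely as N → ∞. Let Ĥ_N ∈ [1/2,1] satisfy c(Ĥ_N) N^{-2Ĥ_N} = 2 S_N for each (large) N. Then almost surely Ĥ_N → H, and moreover (H - Ĥ_N) log N → 0 almost surely. -/

import Mathlib

open Finset MeasureTheory Filter

open scoped Nat

section Aux
open Set


lemma gaussian_psd (ℓ : ℕ) (α : ℕ → ℝ) (u : ℝ) (hu : 0 ≤ u) :
    0 ≤ ∑ q ∈ Finset.range (ℓ+1), ∑ r ∈ Finset.range (ℓ+1),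
      α q * α r * Real.exp (-(((q:ℝ) - r)^2 * u)) := by
  classical
  set s := Finset.range (ℓ+1)
  set A : ℕ → ℕ → ℝ := fun q k => α q * Real.exp (-((q:ℝ)^2*u)) * (q:ℝ)^k with hA
  set w : ℕ → ℝ := fun k => (2*u)^k / (k)! with hw
  have h3 : ∀ q r k : ℕ, (A q k * A r k) * w k
      = (α q * Real.exp (-((q:ℝ)^2*u)) * (α r * Real.exp (-((r:ℝ)^2*u)))) * ((2*u*(q:ℝ)*(r:ℝ))^k / (k)!) := by
    intro q r k
    simp only [hA, hw, mul_pow]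
    ring
  have hsumm : ∀ q r : ℕ, Summable (fun k : ℕ => (A q k * A r k) * w k) := by
    intro q r
    apply Summable.congr ((Real.summable_pow_div_factorial (2*u*(q:ℝ)*(r:ℝ))).mul_left
      (α q * Real.exp (-((q:ℝ)^2*u)) * (α r * Real.exp (-((r:ℝ)^2*u)))))
    intro k
    exact (h3 q r k).symm
  have key : ∀ q r : ℕ, α q * α r * Real.exp (-(((q:ℝ) - r)^2 * u))
      = ∑' k : ℕ, (A q k * A r k) * w k := by
    intro q r
    have h2 : Real.exp (2*u*(q:ℝ)*(r:ℝ)) = ∑' k : ℕ, (2*u*(q:ℝ)*(r:ℝ))^k / (k)! := by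
      rw [Real.exp_eq_exp_ℝ, NormedSpace.exp_eq_tsum_div]
    have h1 : (-(((q:ℝ)-(r:ℝ))^2*u)) = (-((q:ℝ)^2*u) + -((r:ℝ)^2*u)) + (2*u*(q:ℝ)*(r:ℝ)) := by ring
    rw [tsum_congr (h3 q r), tsum_mul_left, ← h2, h1, Real.exp_add, Real.exp_add]
    ring
  calc (0:ℝ) ≤ ∑' k : ℕ, (∑ q ∈ s, A q k)^2 * w k := by
        apply tsum_nonneg
        intro k
        exact mul_nonneg (sq_nonneg _) (div_nonneg (pow_nonneg (by linarith) _) (Nat.cast_nonneg _))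
    _ = ∑' k : ℕ, ∑ q ∈ s, ∑ r ∈ s, (A q k * A r k) * w k := by
        apply tsum_congr
        intro k
        rw [sq, Finset.sum_mul_sum]
        simp_rw [Finset.sum_mul]
    _ = ∑ q ∈ s, ∑ r ∈ s, ∑' k : ℕ, (A q k * A r k) * w k := by
        rw [Summable.tsum_finsetSum (fun q _ => ?_)]
        · exact Finset.sum_congr rfl fun q _ => Summable.tsum_finsetSum (fun r _ => hsumm q r)
        · exact summable_sum (fun r _ => hsumm q r)
    _ = ∑ q ∈ s, ∑ r ∈ s, α q * α r * Real.exp (-(((q:ℝ) - r)^2 * u)) := by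
        exact Finset.sum_congr rfl fun q _ => Finset.sum_congr rfl fun r _ => (key q r).symm

lemma cont_aux (c e : ℝ) {S : Set ℝ} (hS : ∀ u ∈ S, u ≠ 0) :
    ContinuousOn (fun u : ℝ => (1 - Real.exp (-(c * u))) * u ^ (-1 - e/2)) S := by
  refine ContinuousOn.mul ?_ ?_
  · exact (continuous_const.sub ((continuous_const.mul continuous_id).neg.rexp)).continuousOn
  · intro u hu
    exact (Real.continuousAt_rpow_const u _ (Or.inl (hS u hu))).continuousWithinAt

lemma int_aux {e : ℝ} (he0 : 0 < e) (he2 : e < 2) {c : ℝ} (hc : 0 ≤ c) :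
    IntegrableOn (fun u : ℝ => (1 - Real.exp (-(c * u))) * u ^ (-1 - e/2)) (Set.Ioi (0:ℝ)) := by
  have h1 : IntegrableOn (fun u : ℝ => (1 - Real.exp (-(c * u))) * u ^ (-1 - e/2)) (Set.Ioc (0:ℝ) 1) := by
    have hint : IntegrableOn (fun u : ℝ => c * u ^ (-e/2)) (Set.Ioc (0:ℝ) 1) := by
      exact ((intervalIntegral.intervalIntegrable_rpow' (by linarith)).1).const_mul c
    refine Integrable.mono hint ((cont_aux c e (fun u hu => hu.1.ne')).aestronglyMeasurable
      measurableSet_Ioc) ?_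
    refine (ae_restrict_iff' measurableSet_Ioc).2 (ae_of_all _ fun u hu => ?_)
    obtain ⟨hu0, hu1⟩ := hu
    have hcu : 0 ≤ c * u := mul_nonneg hc hu0.le
    have hexp : Real.exp (-(c * u)) ≤ 1 := Real.exp_le_one_iff.2 (by linarith)
    have hexp2 : 1 - Real.exp (-(c * u)) ≤ c * u := by
      have := Real.add_one_le_exp (-(c * u)); linarith
    have hrp : (0:ℝ) < u ^ (-1 - e/2) := Real.rpow_pos_of_pos hu0 _
    rw [Real.norm_eq_abs, Real.norm_eq_abs, abs_of_nonneg (by positivity : (0:ℝ) ≤ c * u ^ (-e/2)),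
      abs_of_nonneg (mul_nonneg (by linarith) hrp.le)]
    have hpow : u * u ^ (-1 - e/2) = u ^ (-e/2) := by
      nth_rewrite 1 [show u = u ^ (1:ℝ) from (Real.rpow_one u).symm]
      rw [← Real.rpow_add hu0]
      congr 1; ring
    calc (1 - Real.exp (-(c * u))) * u ^ (-1 - e/2) ≤ (c * u) * u ^ (-1 - e/2) := by
          exact mul_le_mul_of_nonneg_right hexp2 hrp.le
      _ = c * u ^ (-e/2) := by rw [mul_assoc, hpow]
  have h2 : IntegrableOn (fun u : ℝ => (1 - Real.exp (-(c * u))) * u ^ (-1 - e/2)) (Set.Ioi (1:ℝ)) := by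
    have hint : IntegrableOn (fun u : ℝ => u ^ (-1 - e/2)) (Set.Ioi (1:ℝ)) :=
      integrableOn_Ioi_rpow_of_lt (by linarith) one_pos
    refine Integrable.mono hint ((cont_aux c e (fun u hu => (lt_trans one_pos hu).ne')).aestronglyMeasurable
      measurableSet_Ioi) ?_
    refine (ae_restrict_iff' measurableSet_Ioi).2 (ae_of_all _ fun u hu => ?_)
    have hu0 : (0:ℝ) < u := lt_trans one_pos hu
    have hexp : Real.exp (-(c * u)) ≤ 1 := Real.exp_le_one_iff.2 (by nlinarith)
    have hexp0 : 0 < Real.exp (-(c * u)) := Real.exp_pos _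
    have hrp : (0:ℝ) < u ^ (-1 - e/2) := Real.rpow_pos_of_pos hu0 _
    rw [Real.norm_eq_abs, Real.norm_eq_abs, abs_of_nonneg hrp.le,
      abs_of_nonneg (mul_nonneg (by linarith) hrp.le)]
    nlinarith
  have := h1.union h2
  rwa [Set.Ioc_union_Ioi_eq_Ioi (le_of_lt one_pos)] at this

lemma I_pos {e : ℝ} (he0 : 0 < e) (he2 : e < 2) :
    0 < ∫ u in Set.Ioi (0:ℝ), (1 - Real.exp (-u)) * u ^ (-1 - e/2) := by
  have hint : IntegrableOn (fun u : ℝ => (1 - Real.exp (-u)) * u ^ (-1 - e/2)) (Set.Ioi (0:ℝ)) := by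
    have h := int_aux he0 he2 (le_of_lt one_pos)
    simpa using h
  have hnn : 0 ≤ᵐ[volume.restrict (Set.Ioi (0:ℝ))] fun u : ℝ => (1 - Real.exp (-u)) * u ^ (-1 - e/2) := by
    refine (ae_restrict_iff' measurableSet_Ioi).2 (ae_of_all _ fun u hu => ?_)
    have hu0 : (0:ℝ) < u := hu
    have : Real.exp (-u) < 1 := Real.exp_lt_one_iff.2 (by linarith)
    have hrp : (0:ℝ) < u ^ (-1 - e/2) := Real.rpow_pos_of_pos hu0 _
    exact mul_nonneg (by linarith) hrp.le
  rw [setIntegral_pos_iff_support_of_nonneg_ae hnn hint]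
  have hsub : Set.Ioi (0:ℝ) ⊆ Function.support (fun u : ℝ => (1 - Real.exp (-u)) * u ^ (-1 - e/2)) := by
    intro u hu
    have hu0 : (0:ℝ) < u := hu
    have h1 : Real.exp (-u) < 1 := Real.exp_lt_one_iff.2 (by linarith)
    have hrp : (0:ℝ) < u ^ (-1 - e/2) := Real.rpow_pos_of_pos hu0 _
    exact ne_of_gt (mul_pos (by linarith) hrp)
  calc (0:ENNReal) < volume (Set.Ioi (0:ℝ)) := by simp [Real.volume_Ioi]
    _ ≤ volume (Function.support (fun u : ℝ => (1 - Real.exp (-u)) * u ^ (-1 - e/2)) ∩ Set.Ioi 0) := by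
        exact measure_mono (fun u hu => ⟨hsub hu, hu⟩)

lemma scaling {e : ℝ} (he0 : 0 < e) (he2 : e < 2) {c : ℝ} (hc : 0 < c) :
    ∫ u in Set.Ioi (0:ℝ), (1 - Real.exp (-(c * u))) * u ^ (-1 - e/2)
      = c ^ (e/2) * ∫ u in Set.Ioi (0:ℝ), (1 - Real.exp (-u)) * u ^ (-1 - e/2) := by
  have h := MeasureTheory.integral_comp_mul_left_Ioi
    (fun v => (1 - Real.exp (-v)) * v ^ (-1 - e/2)) 0 hc
  rw [mul_zero] at h
  have hcongr : ∫ u in Set.Ioi (0:ℝ), (1 - Real.exp (-(c * u))) * (c * u) ^ (-1 - e/2)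
      = ∫ u in Set.Ioi (0:ℝ), c ^ (-1 - e/2) * ((1 - Real.exp (-(c * u))) * u ^ (-1 - e/2)) := by
    refine setIntegral_congr_fun measurableSet_Ioi (fun u hu => ?_)
    have hu0 : (0:ℝ) < u := hu
    rw [Real.mul_rpow hc.le hu0.le]
    ring
  rw [hcongr, integral_const_mul] at h
  -- h : c ^ (-1-e/2) * ∫ (1-exp(-(c u))) u^(-1-e/2) = c⁻¹ • ∫ (1-exp(-v)) v^(-1-e/2)
  have hcne : c ^ (-1 - e/2) ≠ 0 := ne_of_gt (Real.rpow_pos_of_pos hc _)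
  have hkey : c ^ (e/2) = (c ^ (-1 - e/2))⁻¹ * c⁻¹ := by
    rw [← Real.rpow_neg_one c, ← Real.rpow_neg hc.le, ← Real.rpow_add hc]
    congr 1; ring
  rw [smul_eq_mul] at h
  rw [hkey]
  field_simp at h ⊢
  linarith [h]

lemma key_pos {e : ℝ} (he0 : 0 < e) (he2 : e < 2) (ℓ : ℕ) (α : ℕ → ℝ)
    (hsum : ∑ q ∈ Finset.range (ℓ+1), α q = 0)
    (hex : ∃ q ∈ Finset.range (ℓ+1), α q ≠ 0) :
    0 < -∑ q ∈ Finset.range (ℓ+1), ∑ r ∈ Finset.range (ℓ+1),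
        α q * α r * |(q:ℝ) - (r:ℝ)| ^ e := by
  classical
  set s := Finset.range (ℓ+1) with hs
  set I : ℝ := ∫ u in Set.Ioi (0:ℝ), (1 - Real.exp (-u)) * u ^ (-1 - e/2) with hI
  have hIpos : 0 < I := I_pos he0 he2
  have hpair : ∀ q r : ℕ,
      ∫ u in Set.Ioi (0:ℝ), (1 - Real.exp (-(((q:ℝ)-(r:ℝ))^2 * u))) * u ^ (-1 - e/2)
        = |(q:ℝ) - (r:ℝ)| ^ e * I := by
    intro q r
    rcases eq_or_ne q r with h | h
    · subst h
      simp only [sub_self, ne_eq, OfNat.ofNat_ne_zero, not_false_eq_true, zero_pow, zero_mul,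
        neg_zero, Real.exp_zero, sub_self, abs_zero]
      rw [Real.zero_rpow (ne_of_gt he0), zero_mul]
      simp
    · have hcast : ((q:ℝ) - (r:ℝ)) ≠ 0 := sub_ne_zero.2 (by exact_mod_cast h)
      have hcpos : (0:ℝ) < ((q:ℝ)-(r:ℝ))^2 := by positivity
      rw [scaling he0 he2 hcpos]
      congr 1
      rw [← sq_abs ((q:ℝ)-(r:ℝ)), ← Real.rpow_natCast |(q:ℝ)-(r:ℝ)| 2,
        ← Real.rpow_mul (abs_nonneg _)]
      congr 1
      push_cast; ring
  set F : ℝ → ℝ := fun u => ∑ q ∈ s, ∑ r ∈ s,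
      α q * α r * ((Real.exp (-(((q:ℝ)-(r:ℝ))^2 * u)) - 1) * u ^ (-1 - e/2)) with hF
  have hterm_int : ∀ q r : ℕ, IntegrableOn
      (fun u : ℝ => α q * α r * ((Real.exp (-(((q:ℝ)-(r:ℝ))^2 * u)) - 1) * u ^ (-1 - e/2)))
      (Set.Ioi (0:ℝ)) := by
    intro q r
    have h0 : IntegrableOn (fun u : ℝ =>
        α q * α r * -((1 - Real.exp (-(((q:ℝ)-(r:ℝ))^2 * u))) * u ^ (-1 - e/2)))
        (Set.Ioi (0:ℝ)) :=
      ((int_aux he0 he2 (sq_nonneg ((q:ℝ)-(r:ℝ)))).neg).const_mul (α q * α r)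
    exact h0.congr_fun (fun u _ => by ring) measurableSet_Ioi
  have hFint : IntegrableOn F (Set.Ioi (0:ℝ)) := by
    apply MeasureTheory.integrable_finset_sum
    intro q _
    exact MeasureTheory.integrable_finset_sum _ (fun r _ => hterm_int q r)
  have hFval : ∫ u in Set.Ioi (0:ℝ), F u
      = (-∑ q ∈ s, ∑ r ∈ s, α q * α r * |(q:ℝ) - (r:ℝ)| ^ e) * I := by
    rw [hF, MeasureTheory.integral_finset_sum _ (fun q _ =>
      MeasureTheory.integrable_finset_sum _ (fun r _ => hterm_int q r))]
    have hstep : ∀ q ∈ s, (∫ u in Set.Ioi (0:ℝ), ∑ r ∈ s,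
        α q * α r * ((Real.exp (-(((q:ℝ)-(r:ℝ))^2 * u)) - 1) * u ^ (-1 - e/2)))
        = ∑ r ∈ s, -(α q * α r * |(q:ℝ) - (r:ℝ)| ^ e * I) := by
      intro q _
      rw [MeasureTheory.integral_finset_sum _ (fun r _ => hterm_int q r)]
      refine Finset.sum_congr rfl (fun r _ => ?_)
      rw [MeasureTheory.integral_const_mul]
      have hneg : ∫ u in Set.Ioi (0:ℝ), (Real.exp (-(((q:ℝ)-(r:ℝ))^2 * u)) - 1) * u ^ (-1 - e/2)
          = -( |(q:ℝ) - (r:ℝ)| ^ e * I) := by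
        rw [← hpair q r, ← MeasureTheory.integral_neg]
        refine setIntegral_congr_fun measurableSet_Ioi (fun u _ => ?_)
        ring
      rw [hneg]; ring
    rw [Finset.sum_congr rfl hstep]
    rw [neg_mul, Finset.sum_mul, ← Finset.sum_neg_distrib]
    refine Finset.sum_congr rfl (fun q _ => ?_)
    rw [Finset.sum_mul, ← Finset.sum_neg_distrib]
  have hzero2 : ∑ q ∈ s, ∑ r ∈ s, α q * α r = 0 := by
    rw [← Finset.sum_mul_sum, hsum, zero_mul]
  set g : ℝ → ℝ := fun u => ∑ q ∈ s, ∑ r ∈ s,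
      α q * α r * Real.exp (-(((q:ℝ)-(r:ℝ))^2 * u)) with hg
  have hFu : ∀ u : ℝ, F u = g u * u ^ (-1 - e/2) := by
    intro u
    have : F u = g u * u ^ (-1 - e/2) - (∑ q ∈ s, ∑ r ∈ s, α q * α r) * u ^ (-1 - e/2) := by
      rw [hF, hg, Finset.sum_mul, Finset.sum_mul, ← Finset.sum_sub_distrib]
      refine Finset.sum_congr rfl (fun q _ => ?_)
      rw [Finset.sum_mul, Finset.sum_mul, ← Finset.sum_sub_distrib]
      exact Finset.sum_congr rfl (fun r _ => by ring)
    rw [this, hzero2, zero_mul, sub_zero]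
  have hFnn : ∀ u : ℝ, u ∈ Set.Ioi (0:ℝ) → 0 ≤ F u := by
    intro u hu
    rw [hFu u]
    exact mul_nonneg (gaussian_psd ℓ α u (le_of_lt hu)) (Real.rpow_pos_of_pos hu _).le
  -- limit of g at infinity
  have hgtend : Tendsto g atTop (nhds (∑ q ∈ s, α q ^ 2)) := by
    have hlim : ∀ q ∈ s, Tendsto (fun u : ℝ => ∑ r ∈ s,
        α q * α r * Real.exp (-(((q:ℝ)-(r:ℝ))^2 * u))) atTop (nhds (α q ^ 2)) := by
      intro q hqs
      have : (α q : ℝ) ^ 2 = ∑ r ∈ s, (if r = q then α q ^ 2 else 0) := by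
        rw [Finset.sum_ite_eq' s q (fun _ => α q ^ 2)]
        simp [hqs]
      rw [this]
      refine tendsto_finset_sum _ (fun r hrs => ?_)
      rcases eq_or_ne r q with h | h
      · subst h
        have : (fun u : ℝ => α r * α r * Real.exp (-(((r:ℝ)-(r:ℝ))^2 * u)))
            = fun _ : ℝ => α r * α r := by
          funext u; simp
        rw [this]
        simpa [sq] using tendsto_const_nhds (α := ℝ) (f := atTop (α := ℝ))
      · have hcast : ((q:ℝ) - (r:ℝ)) ≠ 0 := sub_ne_zero.2 (by exact_mod_cast (Ne.symm h))
        have hcpos : (0:ℝ) < ((q:ℝ)-(r:ℝ))^2 := by positivity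
        have h1 : Tendsto (fun u : ℝ => ((q:ℝ)-(r:ℝ))^2 * u) atTop atTop :=
          Tendsto.const_mul_atTop hcpos tendsto_id
        have h2 : Tendsto (fun u : ℝ => Real.exp (-(((q:ℝ)-(r:ℝ))^2 * u))) atTop (nhds 0) :=
          Real.tendsto_exp_atBot.comp (tendsto_neg_atTop_atBot.comp h1)
        have h3 := h2.const_mul (α q * α r)
        rw [mul_zero] at h3
        simpa [if_neg h] using h3
    exact tendsto_finset_sum _ hlim
  have hL : 0 < ∑ q ∈ s, α q ^ 2 := by
    obtain ⟨q0, hq0s, hq0⟩ := hex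
    exact Finset.sum_pos' (fun q _ => sq_nonneg _) ⟨q0, hq0s, by positivity⟩
  have hev : ∀ᶠ u : ℝ in atTop, 0 < g u := hgtend.eventually (lt_mem_nhds hL)
  obtain ⟨M, hM⟩ := eventually_atTop.1 hev
  have hFpos : 0 < ∫ u in Set.Ioi (0:ℝ), F u := by
    rw [setIntegral_pos_iff_support_of_nonneg_ae
      ((ae_restrict_iff' measurableSet_Ioi).2 (ae_of_all _ hFnn)) hFint]
    refine lt_of_lt_of_le (b := volume (Set.Ioi (max M 1))) (by simp [Real.volume_Ioi])
      (measure_mono (fun u hu => ?_))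
    · have hu' : max M 1 < u := hu
      have hu0 : (0:ℝ) < u := lt_trans zero_lt_one (lt_of_le_of_lt (le_max_right M 1) hu')
      constructor
      · have hgpos : 0 < g u := hM u ((le_max_left M 1).trans hu'.le)
        have : 0 < F u := by
          rw [hFu u]
          exact mul_pos hgpos (Real.rpow_pos_of_pos hu0 _)
        exact ne_of_gt this
      · exact hu0
  have hfinal := hFpos
  rw [hFval] at hfinal
  nlinarith [hIpos, hfinal]

lemma c_contOn (ℓ : ℕ) (α : ℕ → ℝ) :
    ContinuousOn (fun x : ℝ => -∑ q ∈ Finset.range (ℓ+1), ∑ r ∈ Finset.range (ℓ+1),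
      α q * α r * |(q:ℝ) - (r:ℝ)| ^ (2*x)) (Set.Ioi (0:ℝ)) := by
  refine ContinuousOn.neg ?_
  refine continuousOn_finset_sum _ (fun q _ => ?_)
  refine continuousOn_finset_sum _ (fun r _ => ?_)
  refine ContinuousOn.mul continuousOn_const ?_
  rcases eq_or_ne (|(q:ℝ) - (r:ℝ)|) 0 with h | h
  · refine ContinuousOn.congr (continuousOn_const (c := (0:ℝ))) (fun x hx => ?_)
    have hx0 : (0:ℝ) < x := hx
    rw [h, Real.zero_rpow (by positivity : (2:ℝ)*x ≠ 0)]
  · have hb : 0 < |(q:ℝ) - (r:ℝ)| := lt_of_le_of_ne (abs_nonneg _) (Ne.symm h)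
    have : (fun x : ℝ => |(q:ℝ) - (r:ℝ)| ^ (2*x))
        = fun x : ℝ => Real.exp (Real.log |(q:ℝ) - (r:ℝ)| * (2*x)) := by
      funext x; rw [Real.rpow_def_of_pos hb]
    rw [this]
    exact ((continuous_const.mul (continuous_const.mul continuous_id)).rexp).continuousOn

end Aux

/-- If `N^{2H} S_N → c(H)/2` a.s. and `Ĥ_N ∈ [1/2,1]` solves
`c(Ĥ_N) N^{-2Ĥ_N} = 2 S_N` for all large `N`, then `Ĥ_N → H` a.s. and
`(H - Ĥ_N) log N → 0` a.s. -/
theorem estimator_strong_consistency {Ω : Type*} [MeasurableSpace Ω]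
    (μ : Measure Ω) [IsProbabilityMeasure μ]
    (H : ℝ) (hH : H ∈ Set.Ioo (1/2 : ℝ) 1)
    (ℓ p : ℕ) (hp : 2 ≤ p) (α : ℕ → ℝ)
    (hzero : ∀ r < p, ∑ q ∈ Finset.range (ℓ + 1), α q * (q : ℝ) ^ r = 0)
    (hne : ∑ q ∈ Finset.range (ℓ + 1), α q * (q : ℝ) ^ p ≠ 0)
    (c : ℝ → ℝ)
    (hc : ∀ x : ℝ, c x = -∑ q ∈ Finset.range (ℓ + 1), ∑ r ∈ Finset.range (ℓ + 1),
      α q * α r * |(q : ℝ) - (r : ℝ)| ^ (2 * x))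
    (S : ℕ → Ω → ℝ) (Hhat : ℕ → Ω → ℝ)
    (hSN : ∀ᵐ ω ∂μ, Tendsto (fun N : ℕ => (N : ℝ) ^ (2 * H) * S N ω) atTop (nhds (c H / 2)))
    (hHhat_mem : ∀ N ω, Hhat N ω ∈ Set.Icc (1/2 : ℝ) 1)
    (hHhat_eq : ∀ᵐ ω ∂μ, ∀ᶠ N : ℕ in atTop,
      c (Hhat N ω) * (N : ℝ) ^ (-(2 * Hhat N ω)) = 2 * S N ω) :
    (∀ᵐ ω ∂μ, Tendsto (fun N : ℕ => Hhat N ω) atTop (nhds H)) ∧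
    (∀ᵐ ω ∂μ, Tendsto (fun N : ℕ => (H - Hhat N ω) * Real.log N) atTop (nhds 0)) := by
  obtain ⟨hH1, hH2⟩ := hH
  -- basic facts about α
  have hsum0 : ∑ q ∈ Finset.range (ℓ+1), α q = 0 := by
    have h := hzero 0 (by omega)
    simpa using h
  have hex : ∃ q ∈ Finset.range (ℓ+1), α q ≠ 0 := by
    by_contra h
    push_neg at h
    exact hne (Finset.sum_eq_zero fun q hq => by rw [h q hq, zero_mul])
  -- positivity and continuity of c
  have hcpos : ∀ x : ℝ, 1/2 ≤ x → x < 1 → 0 < c x := by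
    intro x h1 h2
    rw [hc x]
    exact key_pos (by linarith) (by linarith) ℓ α hsum0 hex
  have hccont : ContinuousOn c (Set.Ioi (0:ℝ)) :=
    (c_contOn ℓ α).congr (fun x _ => hc x)
  have hIccIoi : Set.Icc (1/2:ℝ) 1 ⊆ Set.Ioi 0 := fun x hx => lt_of_lt_of_le (by norm_num) hx.1
  -- max of c on [1/2,1]
  obtain ⟨xA, hxA, hxAmax⟩ := (isCompact_Icc : IsCompact (Set.Icc (1/2:ℝ) 1)).exists_isMaxOn
    ⟨1/2, by constructor <;> norm_num⟩ (hccont.mono hIccIoi)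
  set A := c xA with hA
  have hAub : ∀ y ∈ Set.Icc (1/2:ℝ) 1, c y ≤ A := fun y hy => hxAmax hy
  -- min of c on [1/2, H1]
  set H1 : ℝ := (H+1)/2 with hH1def
  have hH1lt1 : H1 < 1 := by rw [hH1def]; linarith
  have hHltH1 : H < H1 := by rw [hH1def]; linarith
  have hhalfH1 : (1/2:ℝ) ≤ H1 := by rw [hH1def]; linarith
  have hsub1 : Set.Icc (1/2:ℝ) H1 ⊆ Set.Ioi 0 := fun x hx => lt_of_lt_of_le (by norm_num) hx.1
  obtain ⟨xa, hxa, hxamin⟩ := (isCompact_Icc : IsCompact (Set.Icc (1/2:ℝ) H1)).exists_isMinOn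
    ⟨1/2, by constructor <;> [norm_num; exact hhalfH1]⟩ (hccont.mono hsub1)
  set a := c xa with ha
  have hapos : 0 < a := hcpos xa hxa.1 (lt_of_le_of_lt hxa.2 hH1lt1)
  have halb : ∀ y ∈ Set.Icc (1/2:ℝ) H1, a ≤ c y := fun y hy => hxamin hy
  -- value of c at H
  set v := c H with hv
  have hvpos : 0 < v := hcpos H hH1.le hH2
  have hApos : 0 < A := lt_of_lt_of_le hvpos (hAub H ⟨hH1.le, hH2.le⟩)
  -- log N tendsto
  have hlogtend : Tendsto (fun N : ℕ => Real.log N) atTop atTop :=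
    Real.tendsto_log_atTop.comp tendsto_natCast_atTop_atTop
  set K : ℝ := Real.log A - Real.log (v/2) with hK
  set K' : ℝ := Real.log a - Real.log (2*v) with hK'
  set C : ℝ := max (K/2) (-(K'/2)) with hC
  -- main a.e. statement
  have hmain : ∀ᵐ ω ∂μ, Tendsto (fun N : ℕ => Hhat N ω) atTop (nhds H) ∧
      Tendsto (fun N : ℕ => (H - Hhat N ω) * Real.log N) atTop (nhds 0) := by
    filter_upwards [hSN, hHhat_eq] with ω hS hE
    have hLset : ∀ᶠ N : ℕ in atTop, (N:ℝ) ^ (2*H) * S N ω ∈ Set.Ioo (v/4) v :=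
      hS.eventually (Ioo_mem_nhds (by linarith) (by linarith))
    have hNge : ∀ᶠ N : ℕ in atTop, 2 ≤ N := eventually_ge_atTop 2
    -- key identity
    have hkey : ∀ᶠ N : ℕ in atTop,
        2*((Hhat N ω - H) * Real.log N)
          = Real.log (c (Hhat N ω)) - Real.log (2 * ((N:ℝ)^(2*H) * S N ω))
        ∧ 0 < c (Hhat N ω) := by
      filter_upwards [hE, hLset, hNge] with N hEN hLN hN2
      set L : ℝ := (N:ℝ)^(2*H) * S N ω with hL
      have hNpos : (0:ℝ) < N := by exact_mod_cast Nat.lt_of_lt_of_le Nat.zero_lt_two hN2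
      have hSval : S N ω = L * (N:ℝ)^(-(2*H)) := by
        have h0 : (N:ℝ)^(2*H) * (N:ℝ)^(-(2*H)) = 1 := by
          rw [← Real.rpow_add hNpos]; simp
        calc S N ω = S N ω * ((N:ℝ)^(2*H) * (N:ℝ)^(-(2*H))) := by rw [h0, mul_one]
          _ = ((N:ℝ)^(2*H) * S N ω) * (N:ℝ)^(-(2*H)) := by ring
          _ = L * (N:ℝ)^(-(2*H)) := by rw [← hL]
      have hc1 : c (Hhat N ω) = (2 * L) * (N:ℝ) ^ (2*Hhat N ω - 2*H) := by
        have h1 : (N:ℝ)^(-(2*Hhat N ω)) * (N:ℝ)^(2*Hhat N ω) = 1 := by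
          rw [← Real.rpow_add hNpos]; simp
        have h2 : (N:ℝ)^(-(2*H)) * (N:ℝ)^(2*Hhat N ω) = (N:ℝ)^(2*Hhat N ω - 2*H) := by
          rw [← Real.rpow_add hNpos]; congr 1; ring
        calc c (Hhat N ω)
            = c (Hhat N ω) * ((N:ℝ)^(-(2*Hhat N ω)) * (N:ℝ)^(2*Hhat N ω)) := by
              rw [h1, mul_one]
          _ = (c (Hhat N ω) * (N:ℝ)^(-(2*Hhat N ω))) * (N:ℝ)^(2*Hhat N ω) := by ring
          _ = (2 * S N ω) * (N:ℝ)^(2*Hhat N ω) := by rw [hEN]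
          _ = (2 * L) * ((N:ℝ)^(-(2*H)) * (N:ℝ)^(2*Hhat N ω)) := by rw [hSval]; ring
          _ = (2 * L) * (N:ℝ)^(2*Hhat N ω - 2*H) := by rw [h2]
      have hLpos : 0 < L := lt_trans (by linarith) hLN.1
      have hcHhpos : 0 < c (Hhat N ω) := by
        rw [hc1]
        exact mul_pos (by linarith) (Real.rpow_pos_of_pos hNpos _)
      refine ⟨?_, hcHhpos⟩
      rw [hc1, Real.log_mul (by linarith) (ne_of_gt (Real.rpow_pos_of_pos hNpos _)),
        Real.log_rpow hNpos]
      ring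
    have hlogpos : ∀ᶠ N : ℕ in atTop, 0 < Real.log N := by
      filter_upwards [hNge] with N hN2
      exact Real.log_pos (by exact_mod_cast Nat.lt_of_lt_of_le Nat.one_lt_two hN2)
    have hub : ∀ᶠ N : ℕ in atTop, (Hhat N ω - H) * Real.log N ≤ K/2 := by
      filter_upwards [hkey, hLset] with N hk hLN
      have h1 : Real.log (c (Hhat N ω)) ≤ Real.log A :=
        Real.log_le_log hk.2 (hAub _ (hHhat_mem N ω))
      have h2 : Real.log (v/2) ≤ Real.log (2 * ((N:ℝ)^(2*H) * S N ω)) :=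
        Real.log_le_log (by linarith) (by have := hLN.1; linarith)
      have := hk.1
      rw [hK]
      linarith
    have hsmall : Tendsto (fun N : ℕ => K/(2*Real.log N)) atTop (nhds 0) :=
      Tendsto.div_atTop tendsto_const_nhds (Tendsto.const_mul_atTop two_pos hlogtend)
    have hsm : ∀ᶠ N : ℕ in atTop, K/(2*Real.log N) < (1-H)/2 :=
      hsmall.eventually (gt_mem_nhds (by linarith))
    have hHle : ∀ᶠ N : ℕ in atTop, Hhat N ω ∈ Set.Icc (1/2:ℝ) H1 := by
      filter_upwards [hub, hlogpos, hsm] with N h1 h2 h3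
      refine ⟨(hHhat_mem N ω).1, ?_⟩
      have h4 : Hhat N ω - H ≤ (K/2)/Real.log N := (le_div_iff₀ h2).2 h1
      have h5 : (K/2)/Real.log N = K/(2*Real.log N) := by ring
      rw [hH1def]
      linarith
    have hlb : ∀ᶠ N : ℕ in atTop, K'/2 ≤ (Hhat N ω - H) * Real.log N := by
      filter_upwards [hkey, hLset, hHle] with N hk hLN hmem
      have h1 : Real.log a ≤ Real.log (c (Hhat N ω)) :=
        Real.log_le_log hapos (halb _ hmem)
      have h2 : Real.log (2 * ((N:ℝ)^(2*H) * S N ω)) ≤ Real.log (2*v) :=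
        Real.log_le_log (by have := hLN.1; linarith) (by have := hLN.2; linarith)
      have := hk.1
      rw [hK']
      linarith
    have habs : ∀ᶠ N : ℕ in atTop, |Hhat N ω - H| ≤ C / Real.log N := by
      filter_upwards [hub, hlb, hlogpos] with N h1 h2 h3
      have hC1 : K/2 ≤ C := le_max_left _ _
      have hC2 : -C ≤ K'/2 := by
        have := le_max_right (K/2) (-(K'/2)); rw [hC]; linarith
      have hT : |(Hhat N ω - H) * Real.log N| ≤ C := abs_le.2 ⟨by linarith, by linarith⟩
      rw [le_div_iff₀ h3]
      calc |Hhat N ω - H| * Real.log N = |(Hhat N ω - H) * Real.log N| := by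
            rw [abs_mul, abs_of_pos h3]
        _ ≤ C := hT
    have hCdiv : Tendsto (fun N : ℕ => C / Real.log N) atTop (nhds 0) :=
      Tendsto.div_atTop tendsto_const_nhds hlogtend
    have hHtend : Tendsto (fun N : ℕ => Hhat N ω) atTop (nhds H) := by
      have hup : ∀ᶠ N : ℕ in atTop, Hhat N ω ≤ H + C / Real.log N :=
        habs.mono fun N h => by have := (abs_le.1 h).2; linarith
      have hdn : ∀ᶠ N : ℕ in atTop, H - C / Real.log N ≤ Hhat N ω :=
        habs.mono fun N h => by have := (abs_le.1 h).1; linarith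
      have l1 : Tendsto (fun N : ℕ => H - C / Real.log N) atTop (nhds H) := by
        have := (tendsto_const_nhds : Tendsto (fun _ : ℕ => H) atTop (nhds H)).sub hCdiv
        simpa using this
      have l2 : Tendsto (fun N : ℕ => H + C / Real.log N) atTop (nhds H) := by
        have := (tendsto_const_nhds : Tendsto (fun _ : ℕ => H) atTop (nhds H)).add hCdiv
        simpa using this
      exact tendsto_of_tendsto_of_tendsto_of_le_of_le' l1 l2 hdn hup
    have hcontH : ContinuousAt c H :=
      hccont.continuousAt (isOpen_Ioi.mem_nhds (show (0:ℝ) < H by linarith))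
    have hlogc : Tendsto (fun N : ℕ => Real.log (c (Hhat N ω))) atTop (nhds (Real.log v)) := by
      have h1 : Tendsto (fun N : ℕ => c (Hhat N ω)) atTop (nhds v) := hcontH.tendsto.comp hHtend
      exact (Real.continuousAt_log hvpos.ne').tendsto.comp h1
    have hlog2L : Tendsto (fun N : ℕ => Real.log (2 * ((N:ℝ)^(2*H) * S N ω))) atTop
        (nhds (Real.log v)) := by
      have h1 : Tendsto (fun N : ℕ => 2 * ((N:ℝ)^(2*H) * S N ω)) atTop (nhds (2*(v/2))) :=
        hS.const_mul 2
      rw [show (2:ℝ)*(v/2) = v by ring] at h1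
      exact (Real.continuousAt_log hvpos.ne').tendsto.comp h1
    have h2T : Tendsto (fun N : ℕ => 2*((Hhat N ω - H)*Real.log N)) atTop (nhds 0) := by
      have hsub := hlogc.sub hlog2L
      rw [sub_self] at hsub
      exact Tendsto.congr' (hkey.mono fun N h => h.1.symm) hsub
    have hT : Tendsto (fun N : ℕ => (Hhat N ω - H)*Real.log N) atTop (nhds 0) := by
      have h3 := h2T.div_const 2
      rw [zero_div] at h3
      exact h3.congr fun N => by ring
    refine ⟨hHtend, ?_⟩
    have h4 := hT.neg
    rw [neg_zero] at h4
    exact h4.congr fun N => by ring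
  exact ⟨hmain.mono fun ω h => h.1, hmain.mono fun ω h => h.2⟩
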